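/- Let 𝒜 be a finite set of nonnegative d×d real matrices such that each A ∈ 𝒜 has a vector x_A ∈ ℝ^d with all coordinates strictly positive satisfying A x_A = ρ(A) x_A with ρ(A) > 0. Let ω = (ω_1, ω_2, …) be a sequence with ω_i ∈ 𝒜. For A, B ∈ 𝒜 let I_A(n) = #{1 ≤ i ≤ n : ω_i = A} and I_{AB}(n) = #{1 ≤ i ≤ n : ω_i = A and ω_{i+1} = B}, and assume the limits d(A) = lim_{n→∞} I_A(n)/n and d(AB) = lim_{n→∞} I_{AB}(n)/n exist for all A ∈ 𝒜 and all pairs A, B ∈ 𝒜. Set r̄(A,B) = max_j (x_B)_j/(x_A)_j and r̲(A,B) = min_j (x_B)_j/(x_A)_j, and define ρ̄(ω) = ∏_{A ∈ 𝒜} ρ(A)^{d(A)} · ∏_{A,B ∈ 𝒜} r̄(A,B)^{d(AB)} and ρ̲(ω) = ∏_{A ∈ 𝒜} ρ(A)^{d(A)} · ∏_{A,B ∈ 𝒜} r̲(A,B)^{d(AB)}. Then liminf_{n→∞} ‖ω_1 ω_2 ⋯ ω_n‖₁^{1/n} ≥ ρ̲(ω) and limsup_{n→∞} ‖ω_1 ω_2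 ⋯ ω_n‖₁^{1/n} ≤ ρ̄(ω). -/

import Mathlib

open Filter

/-- The entrywise 1-norm `‖A‖₁ = ∑_{i,j} |a_{ij}|`. -/
def norm1 {d : ℕ} (A : Matrix (Fin d) (Fin d) ℝ) : ℝ :=
  ∑ i, ∑ j, |A i j|

/-- `r̄(A,B) = max_j (x_B)_j/(x_A)_j`. -/
noncomputable def rmax {d : ℕ} (u v : Fin d → ℝ) : ℝ := ⨆ j : Fin d, u j / v j

/-- `r̲(A,B) = min_j (x_B)_j/(x_A)_j`. -/
noncomputable def rmin {d : ℕ} (u v : Fin d → ℝ) : ℝ := ⨅ j : Fin d, u j / v j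

/-- Bounds on the exponential growth rate of
`‖ω_1 ω_2 ⋯ ω_n‖₁^{1/n}` for a sequence `ω` drawn from a finite set `𝒜` of
nonnegative matrices with positive eigenvectors, in terms of the densities of
letters and of two-letter words in `ω`:
`ρ̲(ω) ≤ liminf ‖ω_1 ⋯ ω_n‖₁^{1/n}` and `limsup ‖ω_1 ⋯ ω_n‖₁^{1/n} ≤ ρ̄(ω)`. -/
lemma iInf_pos_of_pos {d : ℕ} (hd : 0 < d) (f : Fin d → ℝ) (hf : ∀ j, 0 < f j) :
    0 < ⨅ j, f j := by
  haveI : Nonempty (Fin d) := ⟨⟨0, hd⟩⟩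
  obtain ⟨j0, hj0⟩ := Finite.exists_min f
  exact lt_of_lt_of_le (hf j0) (le_ciInf hj0)

lemma finIInf_le {d : ℕ} (f : Fin d → ℝ) (j : Fin d) : ⨅ j, f j ≤ f j :=
  ciInf_le (Set.Finite.bddBelow (Set.finite_range f)) j

lemma le_finISup {d : ℕ} (f : Fin d → ℝ) (j : Fin d) : f j ≤ ⨆ j, f j :=
  le_ciSup (Set.Finite.bddAbove (Set.finite_range f)) j

lemma rmin_pos {d : ℕ} (hd : 0 < d) {u v : Fin d → ℝ} (hu : ∀ j, 0 < u j)
    (hv : ∀ j, 0 < v j) : 0 < rmin u v :=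
  iInf_pos_of_pos hd _ fun j => div_pos (hu j) (hv j)

lemma rmax_pos {d : ℕ} (hd : 0 < d) {u v : Fin d → ℝ} (hu : ∀ j, 0 < u j)
    (hv : ∀ j, 0 < v j) : 0 < rmax u v := by
  have j0 : Fin d := ⟨0, hd⟩
  exact lt_of_lt_of_le (div_pos (hu j0) (hv j0)) (le_finISup (fun j => u j / v j) j0)

lemma le_of_rmin {d : ℕ} {u v : Fin d → ℝ} (hv : ∀ j, 0 < v j) (j : Fin d) :
    rmin u v * v j ≤ u j := by
  have h : rmin u v ≤ u j / v j := finIInf_le (fun j => u j / v j) j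
  calc rmin u v * v j ≤ (u j / v j) * v j :=
        mul_le_mul_of_nonneg_right h (le_of_lt (hv j))
    _ = u j := div_mul_cancel₀ _ (ne_of_gt (hv j))

lemma le_of_rmax {d : ℕ} {u v : Fin d → ℝ} (hv : ∀ j, 0 < v j) (j : Fin d) :
    u j ≤ rmax u v * v j := by
  have h : u j / v j ≤ rmax u v := le_finISup (fun j => u j / v j) j
  calc u j = (u j / v j) * v j := (div_mul_cancel₀ _ (ne_of_gt (hv j))).symm
    _ ≤ rmax u v * v j := mul_le_mul_of_nonneg_right h (le_of_lt (hv j))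

lemma mulVec_mono {d : ℕ} {P : Matrix (Fin d) (Fin d) ℝ} (hP : ∀ i j, 0 ≤ P i j)
    {u v : Fin d → ℝ} (h : ∀ j, u j ≤ v j) (k : Fin d) :
    P.mulVec u k ≤ P.mulVec v k := by
  simp only [Matrix.mulVec, dotProduct]
  exact Finset.sum_le_sum fun j _ => mul_le_mul_of_nonneg_left (h j) (hP k j)

theorem stmt12 {d : ℕ} (hd : 0 < d) (𝒜 : Finset (Matrix (Fin d) (Fin d) ℝ))
    (x : Matrix (Fin d) (Fin d) ℝ → Fin d → ℝ)
    (ρ : Matrix (Fin d) (Fin d) ℝ → ℝ)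
    (hA : ∀ A ∈ 𝒜, ∀ i j, 0 ≤ A i j)
    (hx : ∀ A ∈ 𝒜, ∀ i, 0 < x A i)
    (hρ : ∀ A ∈ 𝒜, 0 < ρ A)
    (heig : ∀ A ∈ 𝒜, A.mulVec (x A) = ρ A • x A)
    (ω : ℕ → Matrix (Fin d) (Fin d) ℝ) (hω : ∀ i, ω i ∈ 𝒜)
    (dA : Matrix (Fin d) (Fin d) ℝ → ℝ)
    (dAB : Matrix (Fin d) (Fin d) ℝ → Matrix (Fin d) (Fin d) ℝ → ℝ)
    (hdA : ∀ A ∈ 𝒜,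
      Tendsto (fun n => (({i | i < n ∧ ω i = A} : Set ℕ).ncard : ℝ) / n)
        atTop (nhds (dA A)))
    (hdAB : ∀ A ∈ 𝒜, ∀ B ∈ 𝒜,
      Tendsto (fun n => (({i | i < n ∧ ω i = A ∧ ω (i + 1) = B} : Set ℕ).ncard : ℝ) / n)
        atTop (nhds (dAB A B))) :
    (∏ A ∈ 𝒜, ρ A ^ dA A) *
        (∏ A ∈ 𝒜, ∏ B ∈ 𝒜, rmin (x B) (x A) ^ dAB A B) ≤
      liminf (fun n => norm1 ((List.range n).map ω).prod ^ (1 / (n : ℝ))) atTop ∧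
    limsup (fun n => norm1 ((List.range n).map ω).prod ^ (1 / (n : ℝ))) atTop ≤
      (∏ A ∈ 𝒜, ρ A ^ dA A) *
        (∏ A ∈ 𝒜, ∏ B ∈ 𝒜, rmax (x B) (x A) ^ dAB A B) := by
  classical
  set P : ℕ → Matrix (Fin d) (Fin d) ℝ := fun n => ((List.range n).map ω).prod with hPdef
  set f : ℕ → ℝ := fun n => norm1 (P n) ^ (1 / (n : ℝ)) with hfdef
  have hPsucc : ∀ n, P (n + 1) = P n * ω n := by
    intro n
    simp only [hPdef]
    rw [List.range_succ, List.map_append, List.prod_append]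
    simp
  have hPnn : ∀ n i j, 0 ≤ P n i j := by
    intro n
    induction n with
    | zero =>
      intro i j
      by_cases h : i = j <;> simp [hPdef, Matrix.one_apply, h]
    | succ n ih =>
      intro i j
      rw [hPsucc, Matrix.mul_apply]
      exact Finset.sum_nonneg fun k _ => mul_nonneg (ih i k) (hA _ (hω n) k j)
  have hxpos : ∀ n j, 0 < x (ω n) j := fun n j => hx _ (hω n) j
  have hρpos : ∀ n, 0 < ρ (ω n) := fun n => hρ _ (hω n)
  have hAne : 𝒜.Nonempty := ⟨ω 0, hω 0⟩
  set m0 : ℝ := 𝒜.inf' hAne (fun A => ⨅ j, x A j) with hm0def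
  set M0 : ℝ := 𝒜.sup' hAne (fun A => ⨆ j, x A j) with hM0def
  have hm0pos : 0 < m0 := by
    rw [hm0def]
    exact (Finset.lt_inf'_iff hAne).mpr fun A hA' => iInf_pos_of_pos hd _ (hx A hA')
  have hm0le : ∀ A ∈ 𝒜, ∀ j, m0 ≤ x A j := by
    intro A hA' j
    refine le_trans ?_ (finIInf_le (x A) j)
    rw [hm0def]
    exact Finset.inf'_le (fun A => ⨅ j, x A j) hA'
  have hleM0 : ∀ A ∈ 𝒜, ∀ j, x A j ≤ M0 := by
    intro A hA' j
    refine le_trans (le_finISup (x A) j) ?_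
    rw [hM0def]
    exact Finset.le_sup' (fun A => ⨆ j, x A j) hA'
  have hM0pos : 0 < M0 := lt_of_lt_of_le (hxpos 0 ⟨0, hd⟩) (hleM0 _ (hω 0) _)
  set cρ : ℕ → ℝ := fun n => ∏ i ∈ Finset.range n, ρ (ω i) with hcρdef
  set cup : ℕ → ℝ := fun n => ∏ i ∈ Finset.range n, rmax (x (ω (i + 1))) (x (ω i)) with hcupdef
  set clo : ℕ → ℝ := fun n => ∏ i ∈ Finset.range n, rmin (x (ω (i + 1))) (x (ω i)) with hclodef
  have hcρpos : ∀ n, 0 < cρ n := fun n => Finset.prod_pos fun i _ => hρpos i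
  have hcuppos : ∀ n, 0 < cup n :=
    fun n => Finset.prod_pos fun i _ => rmax_pos hd (hxpos _) (hxpos _)
  have hclopos : ∀ n, 0 < clo n :=
    fun n => Finset.prod_pos fun i _ => rmin_pos hd (hxpos _) (hxpos _)
  -- key componentwise estimates
  have keyUp : ∀ n k, (P (n + 1)).mulVec (x (ω n)) k ≤ (cρ (n + 1) * cup n) * x (ω 0) k := by
    intro n
    induction n with
    | zero =>
      intro k
      have h1 : P 1 = ω 0 := by rw [hPsucc 0]; simp [hPdef]
      rw [h1, heig _ (hω 0)]
      simp only [hcρdef, hcupdef, Finset.prod_range_one, Finset.prod_range_zero, mul_one,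
        Pi.smul_apply, smul_eq_mul]
      simp
    | succ n ih =>
      intro k
      set r : ℝ := rmax (x (ω (n + 1))) (x (ω n)) with hrdef
      have hrpos : 0 < r := rmax_pos hd (hxpos _) (hxpos _)
      have e1 : (P (n + 2)).mulVec (x (ω (n + 1))) k
          = ρ (ω (n + 1)) * (P (n + 1)).mulVec (x (ω (n + 1))) k := by
        rw [hPsucc (n + 1), ← Matrix.mulVec_mulVec, heig _ (hω (n + 1)),
          Matrix.mulVec_smul]
        simp
      have e2 : (P (n + 1)).mulVec (x (ω (n + 1))) k
          ≤ r * (P (n + 1)).mulVec (x (ω n)) k := by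
        have h3 : (P (n + 1)).mulVec (x (ω (n + 1))) k ≤ (P (n + 1)).mulVec (r • x (ω n)) k :=
          mulVec_mono (hPnn (n + 1)) (fun j => le_of_rmax (hxpos n) j) k
        rwa [Matrix.mulVec_smul, Pi.smul_apply, smul_eq_mul] at h3
      have e3 : (P (n + 2)).mulVec (x (ω (n + 1))) k
          ≤ ρ (ω (n + 1)) * (r * ((cρ (n + 1) * cup n) * x (ω 0) k)) := by
        rw [e1]
        refine mul_le_mul_of_nonneg_left (le_trans e2 ?_) (le_of_lt (hρpos (n + 1)))
        exact mul_le_mul_of_nonneg_left (ih k) (le_of_lt hrpos)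
      refine le_trans e3 (le_of_eq ?_)
      have hc1 : cρ (n + 2) = cρ (n + 1) * ρ (ω (n + 1)) := by
        simp only [hcρdef]; rw [Finset.prod_range_succ]
      have hc2 : cup (n + 1) = cup n * r := by
        simp only [hcupdef, hrdef]; rw [Finset.prod_range_succ]
      rw [hc1, hc2]; ring
  have keyLo : ∀ n k, (cρ (n + 1) * clo n) * x (ω 0) k ≤ (P (n + 1)).mulVec (x (ω n)) k := by
    intro n
    induction n with
    | zero =>
      intro k
      have h1 : P 1 = ω 0 := by rw [hPsucc 0]; simp [hPdef]
      rw [h1, heig _ (hω 0)]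
      simp only [hcρdef, hclodef, Finset.prod_range_one, Finset.prod_range_zero, mul_one,
        Pi.smul_apply, smul_eq_mul]
      simp
    | succ n ih =>
      intro k
      set r : ℝ := rmin (x (ω (n + 1))) (x (ω n)) with hrdef
      have hrpos : 0 < r := rmin_pos hd (hxpos _) (hxpos _)
      have e1 : (P (n + 2)).mulVec (x (ω (n + 1))) k
          = ρ (ω (n + 1)) * (P (n + 1)).mulVec (x (ω (n + 1))) k := by
        rw [hPsucc (n + 1), ← Matrix.mulVec_mulVec, heig _ (hω (n + 1)),
          Matrix.mulVec_smul]
        simp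
      have e2 : r * (P (n + 1)).mulVec (x (ω n)) k
          ≤ (P (n + 1)).mulVec (x (ω (n + 1))) k := by
        have h3 : (P (n + 1)).mulVec (r • x (ω n)) k ≤ (P (n + 1)).mulVec (x (ω (n + 1))) k :=
          mulVec_mono (hPnn (n + 1)) (fun j => le_of_rmin (hxpos n) j) k
        rwa [Matrix.mulVec_smul, Pi.smul_apply, smul_eq_mul] at h3
      have e3 : ρ (ω (n + 1)) * (r * ((cρ (n + 1) * clo n) * x (ω 0) k))
          ≤ (P (n + 2)).mulVec (x (ω (n + 1))) k := by
        rw [e1]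
        refine mul_le_mul_of_nonneg_left (le_trans ?_ e2) (le_of_lt (hρpos (n + 1)))
        exact mul_le_mul_of_nonneg_left (ih k) (le_of_lt hrpos)
      refine le_trans (le_of_eq ?_) e3
      have hc1 : cρ (n + 2) = cρ (n + 1) * ρ (ω (n + 1)) := by
        simp only [hcρdef]; rw [Finset.prod_range_succ]
      have hc2 : clo (n + 1) = clo n * r := by
        simp only [hclodef, hrdef]; rw [Finset.prod_range_succ]
      rw [hc1, hc2]; ring
  -- norm of P
  have normP : ∀ n, norm1 (P n) = ∑ i, ∑ j, P n i j := fun n =>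
    Finset.sum_congr rfl fun i _ => Finset.sum_congr rfl fun j _ => abs_of_nonneg (hPnn n i j)
  have norm1nn : ∀ n, 0 ≤ norm1 (P n) := fun n =>
    Finset.sum_nonneg fun i _ => Finset.sum_nonneg fun j _ => abs_nonneg _
  -- upper bound on norm1
  have sumUp : ∀ n, norm1 (P (n + 1)) ≤ (d * M0 / m0) * (cρ (n + 1) * cup n) := by
    intro n
    have h1 : m0 * norm1 (P (n + 1)) ≤ ∑ k, (P (n + 1)).mulVec (x (ω n)) k := by
      rw [normP, Finset.mul_sum]
      refine Finset.sum_le_sum fun k _ => ?_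
      rw [Finset.mul_sum]
      simp only [Matrix.mulVec, dotProduct]
      refine Finset.sum_le_sum fun j _ => ?_
      calc m0 * P (n + 1) k j = P (n + 1) k j * m0 := mul_comm _ _
        _ ≤ P (n + 1) k j * x (ω n) j :=
          mul_le_mul_of_nonneg_left (hm0le _ (hω n) j) (hPnn _ _ _)
    have h2 : ∑ k, (P (n + 1)).mulVec (x (ω n)) k ≤ (cρ (n + 1) * cup n) * ∑ k, x (ω 0) k := by
      rw [Finset.mul_sum]
      exact Finset.sum_le_sum fun k _ => keyUp n k
    have h3 : (∑ k, x (ω 0) k) ≤ d * M0 := by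
      calc (∑ k : Fin d, x (ω 0) k) ≤ ∑ _k : Fin d, M0 :=
            Finset.sum_le_sum fun k _ => hleM0 _ (hω 0) k
        _ = d * M0 := by simp [Finset.sum_const, nsmul_eq_mul, Finset.card_univ]
    have h4 : m0 * norm1 (P (n + 1)) ≤ (cρ (n + 1) * cup n) * (d * M0) :=
      le_trans h1 (le_trans h2 (mul_le_mul_of_nonneg_left h3
        (le_of_lt (mul_pos (hcρpos _) (hcuppos _)))))
    have h5 : norm1 (P (n + 1)) ≤ (cρ (n + 1) * cup n) * (d * M0) / m0 :=
      (le_div_iff₀' hm0pos).mpr h4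
    refine le_trans h5 (le_of_eq ?_)
    field_simp
  -- lower bound on norm1
  have sumLo : ∀ n, (m0 / M0) * (cρ (n + 1) * clo n) ≤ norm1 (P (n + 1)) := by
    intro n
    have h1 : ∑ k, (P (n + 1)).mulVec (x (ω n)) k ≤ M0 * norm1 (P (n + 1)) := by
      rw [normP, Finset.mul_sum]
      refine Finset.sum_le_sum fun k _ => ?_
      rw [Finset.mul_sum]
      simp only [Matrix.mulVec, dotProduct]
      refine Finset.sum_le_sum fun j _ => ?_
      calc P (n + 1) k j * x (ω n) j ≤ P (n + 1) k j * M0 :=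
            mul_le_mul_of_nonneg_left (hleM0 _ (hω n) j) (hPnn _ _ _)
        _ = M0 * P (n + 1) k j := mul_comm _ _
    have h2 : (cρ (n + 1) * clo n) * ∑ k, x (ω 0) k ≤ ∑ k, (P (n + 1)).mulVec (x (ω n)) k := by
      rw [Finset.mul_sum]
      exact Finset.sum_le_sum fun k _ => keyLo n k
    have h3 : m0 ≤ ∑ k, x (ω 0) k := by
      refine le_trans (hm0le _ (hω 0) ⟨0, hd⟩) ?_
      exact Finset.single_le_sum (fun k _ => le_of_lt (hxpos 0 k)) (Finset.mem_univ _)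
    have h4 : (cρ (n + 1) * clo n) * m0 ≤ M0 * norm1 (P (n + 1)) :=
      le_trans (mul_le_mul_of_nonneg_left h3
        (le_of_lt (mul_pos (hcρpos _) (hclopos _)))) (le_trans h2 h1)
    have h5 : (cρ (n + 1) * clo n) * m0 / M0 ≤ norm1 (P (n + 1)) :=
      (div_le_iff₀' hM0pos).mpr h4
    refine le_trans (le_of_eq ?_) h5
    field_simp
  -- counting
  set cnt1 : ℕ → Matrix (Fin d) (Fin d) ℝ → ℕ :=
    fun n A => ((Finset.range n).filter fun i => ω i = A).card with hcnt1def
  set cnt2 : ℕ → Matrix (Fin d) (Fin d) ℝ → Matrix (Fin d) (Fin d) ℝ → ℕ :=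
    fun n A B => ((Finset.range n).filter fun i => ω i = A ∧ ω (i + 1) = B).card with hcnt2def
  have prodρ : ∀ n, cρ n = ∏ A ∈ 𝒜, ρ A ^ cnt1 n A := by
    intro n
    simp only [hcρdef, hcnt1def]
    rw [← Finset.prod_fiberwise_of_maps_to (fun i _ => hω i) (fun i => ρ (ω i))]
    refine Finset.prod_congr rfl fun A hA' => ?_
    calc (∏ i ∈ (Finset.range n).filter (fun i => ω i = A), ρ (ω i))
        = ∏ _i ∈ (Finset.range n).filter (fun i => ω i = A), ρ A :=
          Finset.prod_congr rfl fun i hi => by rw [(Finset.mem_filter.mp hi).2]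
      _ = _ := Finset.prod_const _
  have prodPair : ∀ (g : Matrix (Fin d) (Fin d) ℝ → Matrix (Fin d) (Fin d) ℝ → ℝ) (n : ℕ),
      (∏ i ∈ Finset.range n, g (ω i) (ω (i + 1))) = ∏ A ∈ 𝒜, ∏ B ∈ 𝒜, g A B ^ cnt2 n A B := by
    intro g n
    simp only [hcnt2def]
    have hmap : ∀ i ∈ Finset.range n, (ω i, ω (i + 1)) ∈ 𝒜 ×ˢ 𝒜 :=
      fun i _ => Finset.mem_product.mpr ⟨hω i, hω (i + 1)⟩
    rw [← Finset.prod_fiberwise_of_maps_to hmap (fun i => g (ω i) (ω (i + 1))),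
      Finset.prod_product]
    refine Finset.prod_congr rfl fun A hA' => Finset.prod_congr rfl fun B hB' => ?_
    have hfe : (Finset.range n).filter (fun i => (ω i, ω (i + 1)) = (A, B))
        = (Finset.range n).filter (fun i => ω i = A ∧ ω (i + 1) = B) := by
      apply Finset.filter_congr
      intro i _
      simp [Prod.ext_iff]
    rw [hfe]
    calc (∏ i ∈ (Finset.range n).filter (fun i => ω i = A ∧ ω (i + 1) = B), g (ω i) (ω (i + 1)))
        = ∏ _i ∈ (Finset.range n).filter (fun i => ω i = A ∧ ω (i + 1) = B), g A B := by
          refine Finset.prod_congr rfl fun i hi => ?_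
          have h := (Finset.mem_filter.mp hi).2
          rw [h.1, h.2]
      _ = _ := Finset.prod_const _
  -- limits of counts
  have hcnt1T : ∀ A ∈ 𝒜, Tendsto (fun n => (cnt1 n A : ℝ) / n) atTop (nhds (dA A)) := by
    intro A hA'
    refine (hdA A hA').congr fun n => ?_
    have he : ({i | i < n ∧ ω i = A} : Set ℕ)
        = ↑((Finset.range n).filter fun i => ω i = A) := by
      ext i
      simp [Finset.mem_filter, Finset.mem_range]
    rw [he, Set.ncard_coe_finset]
  have hcnt2T : ∀ A ∈ 𝒜, ∀ B ∈ 𝒜,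
      Tendsto (fun n => (cnt2 n A B : ℝ) / n) atTop (nhds (dAB A B)) := by
    intro A hA' B hB'
    refine (hdAB A hA' B hB').congr fun n => ?_
    have he : ({i | i < n ∧ ω i = A ∧ ω (i + 1) = B} : Set ℕ)
        = ↑((Finset.range n).filter fun i => ω i = A ∧ ω (i + 1) = B) := by
      ext i
      simp [Finset.mem_filter, Finset.mem_range]
    rw [he, Set.ncard_coe_finset]
  have hshift : ∀ A ∈ 𝒜, ∀ B ∈ 𝒜,
      Tendsto (fun n => (cnt2 (n - 1) A B : ℝ) / n) atTop (nhds (dAB A B)) := by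
    intro A hA' B hB'
    have h1 : Tendsto (fun n : ℕ => (cnt2 (n - 1) A B : ℝ) / ((n - 1 : ℕ) : ℝ))
        atTop (nhds (dAB A B)) := (hcnt2T A hA' B hB').comp (tendsto_sub_atTop_nat 1)
    have h2 : Tendsto (fun n : ℕ => ((n - 1 : ℕ) : ℝ) / n) atTop (nhds 1) := by
      have h0 : Tendsto (fun n : ℕ => 1 - 1 / (n : ℝ)) atTop (nhds 1) := by
        have := (tendsto_const_nhds (x := (1 : ℝ)) (f := atTop)).sub
          tendsto_one_div_atTop_nhds_zero_nat
        simpa using this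
      refine Tendsto.congr' ?_ h0
      filter_upwards [eventually_ge_atTop 1] with n hn
      have hn' : (1 : ℝ) ≤ (n : ℝ) := by exact_mod_cast hn
      have hnz : (n : ℝ) ≠ 0 := by linarith
      rw [Nat.cast_sub hn]
      field_simp
      norm_num
    have h3 := h1.mul h2
    rw [mul_one] at h3
    refine Tendsto.congr' ?_ h3
    filter_upwards [eventually_ge_atTop 2] with n hn
    have h4 : ((n - 1 : ℕ) : ℝ) ≠ 0 := by
      have : (1 : ℕ) ≤ n - 1 := by omega
      have : (1 : ℝ) ≤ ((n - 1 : ℕ) : ℝ) := by exact_mod_cast this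
      linarith
    rw [div_mul_div_comm, mul_comm ((cnt2 (n - 1) A B : ℝ)) _, mul_div_mul_left _ _ h4]
  have hprodUp : ∀ n, cup n = ∏ A ∈ 𝒜, ∏ B ∈ 𝒜, rmax (x B) (x A) ^ cnt2 n A B := by
    intro n
    simp only [hcupdef]
    exact prodPair (fun A B => rmax (x B) (x A)) n
  have hprodLo : ∀ n, clo n = ∏ A ∈ 𝒜, ∏ B ∈ 𝒜, rmin (x B) (x A) ^ cnt2 n A B := by
    intro n
    simp only [hclodef]
    exact prodPair (fun A B => rmin (x B) (x A)) n
  -- rpow decomposition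
  have hfact : ∀ (b : ℝ), 0 < b → ∀ (k : ℕ) (e : ℝ), (b ^ k) ^ e = b ^ ((k : ℝ) * e) := by
    intro b hb k e
    rw [← Real.rpow_natCast b k, ← Real.rpow_mul (le_of_lt hb)]
  set K : ℝ := d * M0 / m0 with hKdef
  have hdR : (0 : ℝ) < d := by exact_mod_cast hd
  have hKpos : 0 < K := div_pos (mul_pos hdR hM0pos) hm0pos
  set K' : ℝ := m0 / M0 with hK'def
  have hK'pos : 0 < K' := div_pos hm0pos hM0pos
  set U : ℕ → ℝ := fun n => (K * (cρ n * cup (n - 1))) ^ (1 / (n : ℝ)) with hUdef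
  set L : ℕ → ℝ := fun n => (K' * (cρ n * clo (n - 1))) ^ (1 / (n : ℝ)) with hLdef
  have hrpowT : ∀ (b : ℝ), b ≠ 0 → ∀ (g : ℕ → ℝ) (l : ℝ), Tendsto g atTop (nhds l) →
      Tendsto (fun n => b ^ g n) atTop (nhds (b ^ l)) :=
    fun b hb g l hg => ((Real.continuousAt_const_rpow hb).tendsto).comp hg
  have t1 : Tendsto (fun n : ℕ => K ^ (1 / (n : ℝ))) atTop (nhds 1) := by
    have := hrpowT K (ne_of_gt hKpos) (fun n : ℕ => 1 / (n : ℝ)) 0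
      tendsto_one_div_atTop_nhds_zero_nat
    simpa [Real.rpow_zero] using this
  have t1' : Tendsto (fun n : ℕ => K' ^ (1 / (n : ℝ))) atTop (nhds 1) := by
    have := hrpowT K' (ne_of_gt hK'pos) (fun n : ℕ => 1 / (n : ℝ)) 0
      tendsto_one_div_atTop_nhds_zero_nat
    simpa [Real.rpow_zero] using this
  have t2 : Tendsto (fun n : ℕ => ∏ A ∈ 𝒜, ρ A ^ ((cnt1 n A : ℝ) * (1 / (n : ℝ))))
      atTop (nhds (∏ A ∈ 𝒜, ρ A ^ dA A)) := by
    refine tendsto_finset_prod _ fun A hA' => ?_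
    refine hrpowT _ (ne_of_gt (hρ A hA')) _ _ ?_
    exact (hcnt1T A hA').congr fun n => (mul_one_div _ _).symm
  have t3 : Tendsto (fun n : ℕ => ∏ A ∈ 𝒜, ∏ B ∈ 𝒜,
        rmax (x B) (x A) ^ ((cnt2 (n - 1) A B : ℝ) * (1 / (n : ℝ))))
      atTop (nhds (∏ A ∈ 𝒜, ∏ B ∈ 𝒜, rmax (x B) (x A) ^ dAB A B)) := by
    refine tendsto_finset_prod _ fun A hA' => tendsto_finset_prod _ fun B hB' => ?_
    refine hrpowT _ (ne_of_gt (rmax_pos hd (hx B hB') (hx A hA'))) _ _ ?_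
    exact (hshift A hA' B hB').congr fun n => (mul_one_div _ _).symm
  have t3' : Tendsto (fun n : ℕ => ∏ A ∈ 𝒜, ∏ B ∈ 𝒜,
        rmin (x B) (x A) ^ ((cnt2 (n - 1) A B : ℝ) * (1 / (n : ℝ))))
      atTop (nhds (∏ A ∈ 𝒜, ∏ B ∈ 𝒜, rmin (x B) (x A) ^ dAB A B)) := by
    refine tendsto_finset_prod _ fun A hA' => tendsto_finset_prod _ fun B hB' => ?_
    refine hrpowT _ (ne_of_gt (rmin_pos hd (hx B hB') (hx A hA'))) _ _ ?_
    exact (hshift A hA' B hB').congr fun n => (mul_one_div _ _).symm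
  have Ueq : ∀ n : ℕ, U n = K ^ (1 / (n : ℝ)) *
      ((∏ A ∈ 𝒜, ρ A ^ ((cnt1 n A : ℝ) * (1 / (n : ℝ)))) *
        ∏ A ∈ 𝒜, ∏ B ∈ 𝒜, rmax (x B) (x A) ^ ((cnt2 (n - 1) A B : ℝ) * (1 / (n : ℝ)))) := by
    intro n
    simp only [hUdef]
    rw [Real.mul_rpow (le_of_lt hKpos)
        (le_of_lt (mul_pos (hcρpos n) (hcuppos (n - 1)))),
      Real.mul_rpow (le_of_lt (hcρpos n)) (le_of_lt (hcuppos (n - 1)))]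
    congr 1
    congr 1
    · rw [prodρ n, ← Real.finset_prod_rpow _ _
        (fun A hA' => pow_nonneg (le_of_lt (hρ A hA')) _) _]
      exact Finset.prod_congr rfl fun A hA' => hfact _ (hρ A hA') _ _
    · rw [hprodUp (n - 1),
        ← Real.finset_prod_rpow _ _ (fun A hA' => Finset.prod_nonneg fun B hB' =>
          pow_nonneg (le_of_lt (rmax_pos hd (hx B hB') (hx A hA'))) _) _]
      refine Finset.prod_congr rfl fun A hA' => ?_
      rw [← Real.finset_prod_rpow _ _ (fun B hB' =>
        pow_nonneg (le_of_lt (rmax_pos hd (hx B hB') (hx A hA'))) _) _]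
      exact Finset.prod_congr rfl fun B hB' => hfact _ (rmax_pos hd (hx B hB') (hx A hA')) _ _
  have Leq : ∀ n : ℕ, L n = K' ^ (1 / (n : ℝ)) *
      ((∏ A ∈ 𝒜, ρ A ^ ((cnt1 n A : ℝ) * (1 / (n : ℝ)))) *
        ∏ A ∈ 𝒜, ∏ B ∈ 𝒜, rmin (x B) (x A) ^ ((cnt2 (n - 1) A B : ℝ) * (1 / (n : ℝ)))) := by
    intro n
    simp only [hLdef]
    rw [Real.mul_rpow (le_of_lt hK'pos)
        (le_of_lt (mul_pos (hcρpos n) (hclopos (n - 1)))),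
      Real.mul_rpow (le_of_lt (hcρpos n)) (le_of_lt (hclopos (n - 1)))]
    congr 1
    congr 1
    · rw [prodρ n, ← Real.finset_prod_rpow _ _
        (fun A hA' => pow_nonneg (le_of_lt (hρ A hA')) _) _]
      exact Finset.prod_congr rfl fun A hA' => hfact _ (hρ A hA') _ _
    · rw [hprodLo (n - 1),
        ← Real.finset_prod_rpow _ _ (fun A hA' => Finset.prod_nonneg fun B hB' =>
          pow_nonneg (le_of_lt (rmin_pos hd (hx B hB') (hx A hA'))) _) _]
      refine Finset.prod_congr rfl fun A hA' => ?_
      rw [← Real.finset_prod_rpow _ _ (fun B hB' =>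
        pow_nonneg (le_of_lt (rmin_pos hd (hx B hB') (hx A hA'))) _) _]
      exact Finset.prod_congr rfl fun B hB' => hfact _ (rmin_pos hd (hx B hB') (hx A hA')) _ _
  have TU : Tendsto U atTop (nhds ((∏ A ∈ 𝒜, ρ A ^ dA A) *
      ∏ A ∈ 𝒜, ∏ B ∈ 𝒜, rmax (x B) (x A) ^ dAB A B)) := by
    have h := t1.mul (t2.mul t3)
    rw [one_mul] at h
    exact Tendsto.congr (fun n => (Ueq n).symm) h
  have TL : Tendsto L atTop (nhds ((∏ A ∈ 𝒜, ρ A ^ dA A) *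
      ∏ A ∈ 𝒜, ∏ B ∈ 𝒜, rmin (x B) (x A) ^ dAB A B)) := by
    have h := t1'.mul (t2.mul t3')
    rw [one_mul] at h
    exact Tendsto.congr (fun n => (Leq n).symm) h
  -- eventual bounds
  have hfU : ∀ᶠ n in atTop, f n ≤ U n := by
    filter_upwards [eventually_ge_atTop 1] with n hn
    obtain ⟨m, rfl⟩ : ∃ m, n = m + 1 := ⟨n - 1, by omega⟩
    simp only [hfdef, hUdef]
    refine Real.rpow_le_rpow (norm1nn _) ?_ (by positivity)
    have h := sumUp m
    simpa [Nat.add_sub_cancel] using h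
  have hfL : ∀ᶠ n in atTop, L n ≤ f n := by
    filter_upwards [eventually_ge_atTop 1] with n hn
    obtain ⟨m, rfl⟩ : ∃ m, n = m + 1 := ⟨n - 1, by omega⟩
    simp only [hfdef, hLdef]
    refine Real.rpow_le_rpow ?_ ?_ (by positivity)
    · exact le_of_lt (mul_pos hK'pos (mul_pos (hcρpos _) (hclopos _)))
    · have h := sumLo m
      calc K' * (cρ (m + 1) * clo (m + 1 - 1)) = m0 / M0 * (cρ (m + 1) * clo m) := by
            rw [hK'def]; norm_num
        _ ≤ norm1 (P (m + 1)) := h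
  have hfBddBelow : IsBoundedUnder (· ≥ ·) atTop f :=
    isBoundedUnder_of ⟨0, fun n => Real.rpow_nonneg (norm1nn n) _⟩
  have hfBddAbove : IsBoundedUnder (· ≤ ·) atTop f :=
    (TU.isBoundedUnder_le).mono_le hfU
  constructor
  · rw [← TL.liminf_eq]
    exact liminf_le_liminf hfL TL.isBoundedUnder_ge hfBddAbove.isCoboundedUnder_ge
  · rw [← TU.limsup_eq]
    exact limsup_le_limsup hfU hfBddBelow.isCoboundedUnder_le TU.isBoundedUnder_le
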